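/- Let F ∈ ℂ[X,Y] have total degree 4 with nonzero degree-4 homogeneous part F⁴ transverse to infinity, and L ∈ ℂ[X,Y] of degree 2. With G = L F_X², A = hF_X + kF, B = h'F_X + k'F defined as in the paper, the polynomial X(G F_X + F B) + Y(G F_Y - F A) has degree at most 11, i.e. its degree-12 homogeneous component vanishes. -/

import Mathlib

open MvPolynomial

noncomputable section

abbrev P2 : Type := MvPolynomial (Fin 2) ℂ

lemma coeff_X_mul_pderiv (i : Fin 2) (f : P2) (m : Fin 2 →₀ ℕ) :
    coeff m (X i * pderiv i f) = (m i : ℂ) * coeff m f := by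
  induction f using MvPolynomial.induction_on' with
  | add p q hp hq => simp [mul_add, coeff_add, hp, hq, mul_add]
  | monomial s a =>
    rw [pderiv_monomial]
    by_cases hsi : s i = 0
    · simp only [hsi, Nat.cast_zero, mul_zero, map_zero, mul_zero, coeff_zero]
      rw [coeff_monomial]
      split_ifs with h
      · subst h; simp [hsi]
      · ring
    · have hs : Finsupp.single i 1 + (s - Finsupp.single i 1) = s := by
        ext j
        by_cases hj : j = i
        · subst hj; simp; omega
        · simp [Finsupp.single_apply, hj, Ne.symm]
      have hX : (X i : P2) * monomial (s - Finsupp.single i 1) (a * (s i : ℂ)) =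
          monomial s (a * (s i : ℂ)) := by
        rw [X, monomial_mul, one_mul, hs]
      rw [hX, coeff_monomial, coeff_monomial]
      split_ifs with h
      · subst h; ring
      · ring

lemma totalDegree_pderiv_le' (i : Fin 2) (f : P2) {d : ℕ} (h : f.totalDegree ≤ d + 1) :
    (pderiv i f).totalDegree ≤ d := by
  conv_lhs => rw [f.as_sum]
  rw [map_sum]
  refine (totalDegree_finset_sum _ _).trans (Finset.sup_le fun v hv => ?_)
  rw [pderiv_monomial]
  by_cases hvi : v i = 0
  · simp [hvi]
  · refine (totalDegree_monomial_le _ _).trans ?_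
    have hv4 : v 0 + v 1 ≤ d + 1 := by
      have := le_trans (le_totalDegree hv) h
      rwa [Finsupp.sum_fintype _ _ (fun _ => rfl), Fin.sum_univ_two] at this
    rw [Finsupp.sum_fintype _ _ (fun _ => rfl), Fin.sum_univ_two]
    simp only [Finsupp.tsub_apply]
    by_cases hi0 : i = 0
    · subst hi0; simp [Finsupp.single_apply] at hvi ⊢; omega
    · have hi1 : i = 1 := by omega
      subst hi1; simp [Finsupp.single_apply] at hvi ⊢; omega

lemma euler_defect (f : P2) (d : ℕ) (c : ℂ) (hc : (d : ℂ) + 1 = c)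
    (hf : f.totalDegree ≤ d + 1) :
    (X 0 * pderiv 0 f + X 1 * pderiv 1 f - C c * f).totalDegree ≤ d := by
  refine Finset.sup_le fun m hm => ?_
  rw [mem_support_iff] at hm
  by_contra hlt
  push_neg at hlt
  apply hm
  rw [coeff_sub, coeff_add, coeff_X_mul_pderiv, coeff_X_mul_pderiv, coeff_C_mul]
  have hsum : (m.sum fun _ e => e) = m 0 + m 1 := by
    rw [Finsupp.sum_fintype _ _ (fun _ => rfl), Fin.sum_univ_two]
  rcases eq_or_lt_of_le (Nat.succ_le_of_lt hlt) with heq | hgt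
  · have : (m 0 : ℂ) + m 1 = c := by
      rw [← hc]
      have h01 : m 0 + m 1 = d + 1 := by omega
      have h02 : ((m 0 + m 1 : ℕ) : ℂ) = ((d + 1 : ℕ) : ℂ) := by rw [h01]
      exact_mod_cast h02
    rw [← this]
    ring
  · have : coeff m f = 0 := by
      apply coeff_eq_zero_of_totalDegree_lt
      calc f.totalDegree ≤ d + 1 := hf
        _ < m.sum fun _ e => e := by omega
    rw [this]
    ring

lemma tdm {p q : P2} {a b : ℕ} (hp : p.totalDegree ≤ a) (hq : q.totalDegree ≤ b) :
    (p * q).totalDegree ≤ a + b := (totalDegree_mul p q).trans (add_le_add hp hq)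

lemma tda {p q : P2} {a : ℕ} (hp : p.totalDegree ≤ a) (hq : q.totalDegree ≤ a) :
    (p + q).totalDegree ≤ a := (totalDegree_add p q).trans (max_le hp hq)

lemma tds {p q : P2} {a : ℕ} (hp : p.totalDegree ≤ a) (hq : q.totalDegree ≤ a) :
    (p - q).totalDegree ≤ a := (totalDegree_sub p q).trans (max_le hp hq)

noncomputable def dX (f : P2) : P2 := pderiv 0 f
noncomputable def dY (f : P2) : P2 := pderiv 1 f

noncomputable def hpol (L F : P2) : P2 :=
  C ((1:ℂ)/2) * dX L * (dX F + dY F) + L * dY (dX F)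

noncomputable def kpol (L F : P2) : P2 :=
  - dX F - C ((1:ℂ)/2) * dX L * dY (dX F)

noncomputable def hpol' (L F : P2) : P2 :=
  - dX L * dX F - L * dX (dX F)

noncomputable def kpol' (L F : P2) : P2 :=
  dX F + C ((1:ℂ)/2) * dX L * dX (dX F)

noncomputable def Apol (L F : P2) : P2 := hpol L F * dX F + kpol L F * F

noncomputable def Bpol (L F : P2) : P2 := hpol' L F * dX F + kpol' L F * F

noncomputable def Gpol (L F : P2) : P2 := L * (dX F) ^ 2

/-- The degree-12 homogeneous component of X(GF_X + FB) + Y(GF_Y - FA)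
vanishes, so the foliation G dF + F(B dX - A dY) = 0 has degree 10. -/
theorem degree12_component_vanishes (F : P2) (b : ℂ)
    (L : P2) (hLdef : L = (X 1 + X 0) * (X 1 + X 0 + C b))
    (hF4 : F.totalDegree = 4)
    (htop : homogeneousComponent 4 F ≠ 0)
    (htransverse : Squarefree (homogeneousComponent 4 F)) :
    homogeneousComponent 12
      (X 0 * (Gpol L F * dX F + F * Bpol L F)
        + X 1 * (Gpol L F * dY F - F * Apol L F)) = 0 := by
  subst hLdef
  have h2 : (C ((1:ℂ)/2) : P2) * 2 = 1 := by
    rw [show (2:P2) = C (2:ℂ) from (map_ofNat C 2).symm, ← map_mul]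
    norm_num
  have hpL : pderiv (0:Fin 2) ((X 1 + X 0) * (X 1 + X 0 + C b) : P2)
      = (X 1 + X 0) + (X 1 + X 0 + C b) := by
    simp [pderiv_mul]
  have hm : (C ((1:ℂ)/2) : P2) * pderiv (0:Fin 2) ((X 1 + X 0) * (X 1 + X 0 + C b) : P2)
      = (X 0 + X 1) + C ((1:ℂ)/2 * b) := by
    rw [hpL, C_mul]
    linear_combination (X 1 + X 0 : P2) * h2
  -- degree facts
  have dF : F.totalDegree ≤ 4 := hF4.le
  have dFX : (dX F).totalDegree ≤ 3 := totalDegree_pderiv_le' 0 F (by omega)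
  have dFY : (dY F).totalDegree ≤ 3 := totalDegree_pderiv_le' 1 F (by omega)
  have dFXX : (dX (dX F)).totalDegree ≤ 2 := totalDegree_pderiv_le' 0 (dX F) dFX
  have dFXY : (dY (dX F)).totalDegree ≤ 2 := totalDegree_pderiv_le' 1 (dX F) dFX
  have dU : (X 0 * dX F + X 1 * dY F - 4 * F).totalDegree ≤ 3 := by
    have h := euler_defect F 3 4 (by norm_num) (by omega)
    rwa [show (C (4:ℂ) : P2) = 4 from map_ofNat _ 4] at h
  have dV : (X 0 * dX (dX F) + X 1 * dY (dX F) - 3 * dX F).totalDegree ≤ 2 := by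
    have h := euler_defect (dX F) 2 3 (by norm_num) (by omega)
    rwa [show (C (3:ℂ) : P2) = 3 from map_ofNat _ 3] at h
  have hX0 : (X 0 : P2).totalDegree ≤ 1 := (totalDegree_X _).le
  have hX1 : (X 1 : P2).totalDegree ≤ 1 := (totalDegree_X _).le
  have hCb : (C b : P2).totalDegree ≤ 0 := (totalDegree_C _).le
  have hCp : (C ((1:ℂ)/2 * b) : P2).totalDegree ≤ 0 := (totalDegree_C _).le
  have hs : ((X 0 + X 1 : P2)).totalDegree ≤ 1 := tda hX0 hX1
  have hs' : ((X 1 + X 0 : P2)).totalDegree ≤ 1 := tda hX1 hX0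
  have hL : (((X 1 + X 0) * (X 1 + X 0 + C b) : P2)).totalDegree ≤ 2 :=
    tdm hs' (tda hs' (hCb.trans (by norm_num)))
  have hFX2 : ((dX F)^2).totalDegree ≤ 6 := by rw [pow_two]; exact tdm dFX dFX
  have hmdeg : (((X 0 + X 1) + C ((1:ℂ)/2 * b) : P2)).totalDegree ≤ 1 :=
    tda hs (hCp.trans (by norm_num))
  -- the key identity
  have key : X 0 * (Gpol ((X 1 + X 0) * (X 1 + X 0 + C b)) F * dX F
        + F * Bpol ((X 1 + X 0) * (X 1 + X 0 + C b)) F)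
      + X 1 * (Gpol ((X 1 + X 0) * (X 1 + X 0 + C b)) F * dY F
        - F * Apol ((X 1 + X 0) * (X 1 + X 0 + C b)) F)
      = ((X 1 + X 0) * (X 1 + X 0 + C b) * (dX F)^2) * (X 0 * dX F + X 1 * dY F - 4 * F)
        + F * ( C b * ((X 0 + X 1) * (dX F)^2)
          - (C b - C ((1:ℂ)/2 * b)) * (X 0 * (dX F)^2)
          - C ((1:ℂ)/2 * b) * (X 1 * (dX F)^2)
          - ((X 0 + X 1) + C ((1:ℂ)/2 * b)) * ((X 0 * dX F + X 1 * dY F - 4 * F) * dX F)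
          - ((X 1 + X 0) * (X 1 + X 0 + C b)) * ((X 0 * dX (dX F) + X 1 * dY (dX F) - 3 * dX F) * dX F)
          - C ((1:ℂ)/2 * b) * (F * dX F)
          + ((X 0 + X 1) + C ((1:ℂ)/2 * b)) * (F * (X 0 * dX (dX F) + X 1 * dY (dX F) - 3 * dX F)) ) := by
    simp only [Gpol, Apol, Bpol, hpol, kpol, hpol', kpol', dX, dY]
    rw [hm, hpL]
    ring
  rw [key]
  have q1 := tdm hCb (tdm hs hFX2)
  have q2 := tdm (tds hCb hCp) (tdm hX0 hFX2)
  have q3 := tdm hCp (tdm hX1 hFX2)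
  have q4 := tdm hmdeg (tdm dU dFX)
  have q5 := tdm hL (tdm dV dFX)
  have q6 := tdm hCp (tdm dF dFX)
  have q7 := tdm hmdeg (tdm dF dV)
  have q1' := q1.trans (show (0+(1+6):ℕ) ≤ 7 by norm_num)
  have q2' := q2.trans (show (0+(1+6):ℕ) ≤ 7 by norm_num)
  have q3' := q3.trans (show (0+(1+6):ℕ) ≤ 7 by norm_num)
  have q4' := q4.trans (show (1+(3+3):ℕ) ≤ 7 by norm_num)
  have q5' := q5.trans (show (2+(2+3):ℕ) ≤ 7 by norm_num)
  have q6' := q6.trans (show (0+(4+3):ℕ) ≤ 7 by norm_num)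
  have q7' := q7.trans (show (1+(4+2):ℕ) ≤ 7 by norm_num)
  have hQ := tda (tds (tds (tds (tds (tds q1' q2') q3') q4') q5') q6') q7'
  apply homogeneousComponent_eq_zero
  refine lt_of_le_of_lt ?_ (show (11:ℕ) < 12 by norm_num)
  exact tda ((tdm (tdm hL hFX2) dU).trans (show ((2+6)+3:ℕ) ≤ 11 by norm_num))
    ((tdm dF hQ).trans (show (4+7:ℕ) ≤ 11 by norm_num))
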